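/- Let char F ≠ 2 and c ∈ F^×, K/F finite, σ ∈ Aut_F(K) nontrivial. Then D(K,σ,c) has exactly 2·|C(σ)| automorphisms, where C(σ) is the centralizer of σ in Aut_F(K). -/

import Mathlib

/-- The Dickson doubling multiplication on `B ⊕ B`. -/
def dicksonMul {B : Type*} [Ring B] (σ : B → B) (c : B) (p q : B × B) : B × B :=
  (p.1 * q.1 + c * σ (p.2 * q.2), p.1 * q.2 + p.2 * q.1)

/-- `G` is an isomorphism of `F`-algebras `D(K,σ,c) → D(L,φ,d)`:
a bijective `F`-linear multiplicative map. -/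
def IsDicksonIso (F : Type*) {K L : Type*} [Field F] [Field K] [Field L]
    [Algebra F K] [Algebra F L] (σ : K → K) (c : K) (φ : L → L) (d : L)
    (G : K × K → L × L) : Prop :=
  Function.Bijective G ∧ (∀ p q : K × K, G (p + q) = G p + G q) ∧
    (∀ (a : F) (p : K × K), G (a • p) = a • G p) ∧
    (∀ p q : K × K, G (dicksonMul σ c p q) = dicksonMul φ d (G p) (G q))

section Aux

variable {F K : Type*} [Field F] [Field K] [Algebra F K]

lemma dickson_iso_of (σ τ : K ≃ₐ[F] K) (hτ : τ * σ = σ * τ) (k : K) (hk : k = 1 ∨ k = -1)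
    (c : K) (c₀ : F) (hc : c = algebraMap F K c₀) :
    IsDicksonIso F σ c σ c (fun p => (τ p.1, k * τ p.2)) := by
  have hcomm : ∀ x, τ (σ x) = σ (τ x) := by
    intro x
    simpa [AlgEquiv.mul_apply] using DFunLike.congr_fun hτ x
  have hτc : τ c = c := by rw [hc]; exact τ.commutes c₀
  have hk2 : k * k = 1 := by rcases hk with h | h <;> simp [h]
  have hkne : k ≠ 0 := by rcases hk with h | h <;> simp [h]
  refine ⟨⟨?_, ?_⟩, ?_, ?_, ?_⟩
  · intro p q h
    have h1 : τ p.1 = τ q.1 := congrArg Prod.fst h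
    have h2 : k * τ p.2 = k * τ q.2 := congrArg Prod.snd h
    have h2' : τ p.2 = τ q.2 := mul_left_cancel₀ hkne h2
    exact Prod.ext (τ.injective h1) (τ.injective h2')
  · intro p
    refine ⟨(τ.symm p.1, τ.symm (k * p.2)), ?_⟩
    simp only [AlgEquiv.apply_symm_apply]
    have : k * (k * p.2) = p.2 := by rw [← mul_assoc, hk2, one_mul]
    exact Prod.ext rfl this
  · intro p q
    simp only [Prod.fst_add, Prod.snd_add, map_add, Prod.mk_add_mk, mul_add]
  · intro a p
    simp only [Prod.smul_fst, Prod.smul_snd, Prod.smul_mk]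
    have hs : ∀ x : K, τ (a • x) = a • τ x := fun x => map_smul τ a x
    rw [hs, hs, mul_smul_comm]
  · intro p q
    rcases hk with h | h <;>
      · subst h
        simp only [dicksonMul, map_add, map_mul, hcomm, hτc, mul_neg, neg_mul, neg_neg, map_neg,
          one_mul, mul_one]
        try exact Prod.ext (by ring) (by ring)

lemma dickson_classify (σ : K ≃ₐ[F] K) (hσ : σ ≠ AlgEquiv.refl) (h2 : (2:K) ≠ 0)
    (c : K) (hcne : c ≠ 0) (hτc0 : ∀ τ : K ≃ₐ[F] K, τ c = c)
    (G : K × K → K × K) (hG : IsDicksonIso F σ c σ c G) :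
    ∃ (τ : K ≃ₐ[F] K) (k : K), τ * σ = σ * τ ∧ (k = 1 ∨ k = -1) ∧
      G = fun p => (τ p.1, k * τ p.2) := by
  obtain ⟨hbij, hadd, hsmul, hmul⟩ := hG
  obtain ⟨w0, hw0⟩ : ∃ w : K, σ w ≠ w := by
    by_contra h
    push_neg at h
    exact hσ (AlgEquiv.ext fun x => h x)
  -- G 0 = 0
  have hG0 : G 0 = 0 := by
    have h0 := hadd 0 0
    rw [add_zero] at h0
    have : G 0 + G 0 = G 0 + 0 := by rw [add_zero]; exact h0.symm
    exact add_left_cancel this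
  -- middle nucleus characterization
  have hN : ∀ q : K × K, q.2 = 0 ↔ ∀ a b : K × K,
      dicksonMul σ c (dicksonMul σ c a q) b = dicksonMul σ c a (dicksonMul σ c q b) := by
    intro q
    constructor
    · intro h a b
      simp only [dicksonMul, h, mul_zero, zero_mul, map_zero, map_mul, map_add, add_zero,
        zero_add]
      exact Prod.ext (by ring) (by ring)
    · intro h
      have key := congrArg Prod.snd (h (0, 1) (0, w0))
      simp only [dicksonMul, map_mul, map_one, map_zero] at key
      have key2 : c * σ q.2 * (w0 - σ w0) = 0 := by ring_nf; ring_nf at key; linear_combination key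
      have hw0' : w0 - σ w0 ≠ 0 := sub_ne_zero.mpr (Ne.symm hw0)
      have : σ q.2 = 0 := by
        rcases mul_eq_zero.mp key2 with h' | h'
        · rcases mul_eq_zero.mp h' with h'' | h''
          · exact absurd h'' hcne
          · exact h''
        · exact absurd h' hw0'
      have := σ.injective (this.trans (map_zero σ).symm)
      exact this
  -- G preserves the middle nucleus
  have hGN : ∀ q : K × K, (G q).2 = 0 ↔ q.2 = 0 := by
    intro q
    rw [hN, hN q]
    constructor
    · intro h a b
      apply hbij.1
      rw [hmul, hmul, hmul, hmul]
      exact h (G a) (G b)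
    · intro h a b
      obtain ⟨a', rfl⟩ := hbij.2 a
      obtain ⟨b', rfl⟩ := hbij.2 b
      rw [← hmul, ← hmul, ← hmul, ← hmul, h a' b']
  -- (1,0) is the identity and G fixes it
  have hone : ∀ r : K × K, dicksonMul σ c (1, 0) r = r := by
    intro r; simp [dicksonMul]
  have honer : ∀ r : K × K, dicksonMul σ c r (1, 0) = r := by
    intro r; simp [dicksonMul]
  have hGone : G (1, 0) = (1, 0) := by
    have hle : ∀ r : K × K, dicksonMul σ c (G (1,0)) r = r := by
      intro r
      obtain ⟨q, rfl⟩ := hbij.2 r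
      rw [← hmul, hone]
    have := hle (1, 0)
    rw [honer (G (1,0))] at this
    exact this
  -- the restriction τ₀
  set τ₀ : K → K := fun u => (G (u, 0)).1 with hτ₀def
  have hGfst : ∀ u : K, G (u, 0) = (τ₀ u, 0) := by
    intro u
    have : (G (u, 0)).2 = 0 := (hGN (u, 0)).mpr rfl
    exact Prod.ext rfl this
  have hτ₀add : ∀ u v : K, τ₀ (u + v) = τ₀ u + τ₀ v := by
    intro u v
    have : ((u : K), (0 : K)) + (v, 0) = (u + v, 0) := by simp
    have h' := hadd (u, 0) (v, 0)
    rw [this, hGfst, hGfst, hGfst] at h'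
    exact congrArg Prod.fst h'
  have hτ₀mul : ∀ u v : K, τ₀ (u * v) = τ₀ u * τ₀ v := by
    intro u v
    have hm : dicksonMul (⇑σ) c (u, 0) (v, 0) = (u * v, 0) := by simp [dicksonMul]
    have h' := hmul (u, 0) (v, 0)
    rw [hm, hGfst, hGfst, hGfst] at h'
    have := congrArg Prod.fst h'
    simpa [dicksonMul] using this
  have hτ₀one : τ₀ 1 = 1 := by
    have := hGfst 1
    rw [hGone] at this
    exact (congrArg Prod.fst this).symm
  have hτ₀zero : τ₀ 0 = 0 := by
    have : ((0:K), (0:K)) = (0 : K × K) := rfl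
    rw [hτ₀def]
    simp only [this, hG0]
    rfl
  have hτ₀commutes : ∀ a : F, τ₀ (algebraMap F K a) = algebraMap F K a := by
    intro a
    have h1 : (algebraMap F K a, (0:K)) = a • ((1:K), (0:K)) := by
      simp [Prod.smul_mk, Algebra.algebraMap_eq_smul_one]
    have h2 := hsmul a ((1:K), (0:K))
    rw [hGone] at h2
    have := hGfst (algebraMap F K a)
    rw [h1, h2] at this
    have := congrArg Prod.fst this
    simpa [Algebra.algebraMap_eq_smul_one] using this.symm
  have hτ₀inj : Function.Injective τ₀ := by
    intro u v h
    have : G (u, 0) = G (v, 0) := by rw [hGfst, hGfst, h]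
    exact congrArg Prod.fst (hbij.1 this)
  have hτ₀surj : Function.Surjective τ₀ := by
    intro y
    obtain ⟨q, hq⟩ := hbij.2 ((y : K), (0 : K))
    have hq2 : q.2 = 0 := by
      rw [← hGN, hq]
    have : q = (q.1, 0) := by rw [← hq2]
    refine ⟨q.1, ?_⟩
    have := hGfst q.1
    rw [← ‹q = (q.1, 0)›, hq] at this
    exact (congrArg Prod.fst this).symm
  let τalg : K →ₐ[F] K :=
    { toFun := τ₀, map_one' := hτ₀one, map_mul' := hτ₀mul, map_zero' := hτ₀zero,
      map_add' := hτ₀add, commutes' := hτ₀commutes }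
  let τ : K ≃ₐ[F] K := AlgEquiv.ofBijective τalg ⟨hτ₀inj, hτ₀surj⟩
  have hτeq : ∀ x, τ x = τ₀ x := fun x => rfl
  have hτ₀c : τ₀ c = c := by rw [← hτeq]; exact hτc0 τ
  -- analysis of G (0,1)
  set h := (G (0, 1)).1 with hh
  set k := (G (0, 1)).2 with hk
  have hGj : G (0, 1) = (h, k) := rfl
  have hkne : k ≠ 0 := by
    intro h0
    have : ((0:K), (1:K)).2 = 0 := (hGN (0,1)).mp (by rw [← hk, h0])
    simp at this
  have hjj : dicksonMul (⇑σ) c (0, 1) (0, 1) = (c, 0) := by simp [dicksonMul]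
  have hsq := hmul (0, 1) (0, 1)
  rw [hjj, hGfst, hτ₀c, hGj] at hsq
  have hsnd : h * k + k * h = 0 := (congrArg Prod.snd hsq).symm
  have hhk : h * k = 0 := by
    have : (2 : K) * (h * k) = 0 := by linear_combination hsnd
    rcases mul_eq_zero.mp this with h' | h'
    · exact absurd h' h2
    · exact h'
  have hh0 : h = 0 := by
    rcases mul_eq_zero.mp hhk with h' | h'
    · exact h'
    · exact absurd h' hkne
  have hfst : c = h * h + c * σ (k * k) := congrArg Prod.fst hsq
  have hkk : k * k = 1 := by
    rw [hh0] at hfst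
    have : c * σ (k * k) = c * 1 := by rw [mul_one]; linear_combination hfst.symm
    have hσkk : σ (k * k) = 1 := mul_left_cancel₀ hcne this
    have : σ (k * k) = σ 1 := by rw [hσkk, map_one]
    exact σ.injective this
  have hkval : k = 1 ∨ k = -1 := mul_self_eq_one_iff.mp hkk
  -- value of G on (0, v)
  have hGsnd : ∀ v : K, G (0, v) = (0, k * τ₀ v) := by
    intro v
    have hm : dicksonMul (⇑σ) c (0, 1) (v, 0) = (0, v) := by simp [dicksonMul]
    have h' := hmul (0, 1) (v, 0)
    rw [hm, hGj, hGfst, hh0] at h'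
    rw [h']
    simp [dicksonMul]
  have hGall : G = fun p => (τ p.1, k * τ p.2) := by
    funext p
    have hp : p = (p.1, 0) + (0, p.2) := by simp
    rw [hp, hadd, hGfst, hGsnd]
    simp [hτeq]
  -- commutation
  have hcomm : τ * σ = σ * τ := by
    apply AlgEquiv.ext
    intro x
    rw [AlgEquiv.mul_apply, AlgEquiv.mul_apply]
    have hm : dicksonMul (⇑σ) c (0, x) (0, 1) = (c * σ x, 0) := by simp [dicksonMul]
    have h' := hmul (0, x) (0, 1)
    rw [hm, hGfst, hGsnd, hGj, hh0] at h'
    have := congrArg Prod.fst h'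
    simp only [dicksonMul, zero_mul, mul_zero, zero_add, add_zero] at this
    -- this : τ₀ (c * σ x) = c * σ (k * τ₀ x * k)
    have hL : τ₀ (c * σ x) = c * τ₀ (σ x) := by rw [hτ₀mul, hτ₀c]
    have hR : c * σ (k * τ₀ x * k) = c * σ (τ₀ x) := by
      have : k * τ₀ x * k = τ₀ x := by
        rw [mul_comm (k * τ₀ x) k, ← mul_assoc, hkk, one_mul]
      rw [this]
    rw [hL, hR] at this
    have : τ₀ (σ x) = σ (τ₀ x) := mul_left_cancel₀ hcne this
    simpa [hτeq] using this
  exact ⟨τ, k, hcomm, hkval, hGall⟩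

end Aux

theorem stmt12 (F K : Type*) [Field F] [Field K] [Algebra F K] [FiniteDimensional F K]
    (hF : ringChar F ≠ 2) (σ : K ≃ₐ[F] K) (hσ : σ ≠ AlgEquiv.refl)
    (c : K) (c₀ : F) (hc₀ : c₀ ≠ 0) (hc : c = algebraMap F K c₀) :
    Nat.card {G : K × K → K × K // IsDicksonIso F σ c σ c G}
      = 2 * Nat.card {τ : K ≃ₐ[F] K // τ * σ = σ * τ} := by
  have h2F : (2 : F) ≠ 0 := Ring.two_ne_zero hF
  have hinj : Function.Injective (algebraMap F K) := (algebraMap F K).injective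
  have h2 : (2 : K) ≠ 0 := by
    intro h
    apply h2F
    apply hinj
    rw [map_ofNat, map_zero, h]
  have hcne : c ≠ 0 := by
    rw [hc]
    intro h
    exact hc₀ (hinj (by rw [h, map_zero]))
  have hτc0 : ∀ τ : K ≃ₐ[F] K, τ c = c := by
    intro τ; rw [hc]; exact τ.commutes c₀
  have h1ne : (1 : K) ≠ -1 := by
    intro h
    exact h2 (by linear_combination h)
  -- the bijection
  set Φ : ({τ : K ≃ₐ[F] K // τ * σ = σ * τ} × Bool) →
      {G : K × K → K × K // IsDicksonIso F σ c σ c G} :=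
    fun x => ⟨fun p => (x.1.1 p.1, (if x.2 then 1 else -1) * x.1.1 p.2),
      dickson_iso_of σ x.1.1 x.1.2 _ (by rcases x.2 with _ | _ <;> simp) c c₀ hc⟩ with hΦ
  have hΦbij : Function.Bijective Φ := by
    constructor
    · rintro ⟨⟨τ, hτ⟩, b⟩ ⟨⟨τ', hτ'⟩, b'⟩ h
      have hfun := congrArg Subtype.val h
      have hτeq : τ = τ' := by
        apply AlgEquiv.ext
        intro u
        have := congrFun hfun (u, 0)
        exact congrArg Prod.fst this
      have hkeq : (if b then (1:K) else -1) = (if b' then 1 else -1) := by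
        have := congrArg Prod.snd (congrFun hfun (0, 1))
        simpa [map_one, hΦ] using this
      have hbeq : b = b' := by
        rcases b <;> rcases b' <;> simp at hkeq ⊢
        · exact h1ne hkeq.symm
        · exact h1ne hkeq
      simp [hτeq, hbeq]
    · rintro ⟨G, hG⟩
      obtain ⟨τ, k, hcomm, hk, hGeq⟩ := dickson_classify σ hσ h2 c hcne hτc0 G hG
      rcases hk with hk1 | hk1
      · refine ⟨⟨⟨τ, hcomm⟩, true⟩, ?_⟩
        apply Subtype.ext
        simp only [hΦ]
        rw [hGeq, hk1]
        simp
      · refine ⟨⟨⟨τ, hcomm⟩, false⟩, ?_⟩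
        apply Subtype.ext
        simp only [hΦ]
        rw [hGeq, hk1]
        simp
  have := Nat.card_eq_of_bijective Φ hΦbij
  rw [← this, Nat.card_prod]
  simp [Nat.card_eq_fintype_card, mul_comm]
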